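/- Given strong gross substitutes valuations, a price vector p is packing (i.e., there exist z_i ∈ D_i(p) for each buyer i with Σ_i z_i(e) ≤ b(e) for all e) if and only if there is no overdemanded set, i.e., for all S ⊆ E one has Σ_i (ρ̌_i(E) − ρ̌_i(E∖S)) ≤ b(S), where ρ̌_i is the rank function of the M-convex set of minimal preferred bundles of buyer i at prices p. -/

import Mathlib

open Finset

variable {E : Type*} [Fintype E] [DecidableEq E]

/-- Characteristic (unit) vector of an item. -/
def chi (e : E) : E → ℤ := fun f => if f = e then 1 else 0

/-- The integer box `[0, b]_ℤ` of bundles. -/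
def Box (b : E → ℤ) : Set (E → ℤ) := {z | ∀ e, 0 ≤ z e ∧ z e ≤ b e}

/-- Quasi-linear utility of a bundle at prices `p`. -/
noncomputable def util (v : (E → ℤ) → ℤ) (p : E → ℝ) (z : E → ℤ) : ℝ :=
  (v z : ℝ) - ∑ e : E, p e * (z e : ℝ)

/-- Demand set: utility-maximizing bundles in the box. -/
def Demand (b : E → ℤ) (v : (E → ℤ) → ℤ) (p : E → ℝ) : Set (E → ℤ) :=
  {z | z ∈ Box b ∧ ∀ y ∈ Box b, util v p y ≤ util v p z}

/-- Componentwise minimal preferred bundles. -/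
def MinDemand (b : E → ℤ) (v : (E → ℤ) → ℤ) (p : E → ℝ) : Set (E → ℤ) :=
  {z | z ∈ Demand b v p ∧ ∀ y ∈ Demand b v p, y ≤ z → y = z}

/-- Componentwise maximal preferred bundles. -/
def MaxDemand (b : E → ℤ) (v : (E → ℤ) → ℤ) (p : E → ℝ) : Set (E → ℤ) :=
  {z | z ∈ Demand b v p ∧ ∀ y ∈ Demand b v p, z ≤ y → y = z}

/-- M♮-concavity, equivalent to the strong gross substitutes property. -/
def MNatConcave (b : E → ℤ) (v : (E → ℤ) → ℤ) : Prop :=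
  ∀ x ∈ Box b, ∀ y ∈ Box b, ∀ e : E, y e < x e →
    v x + v y ≤ v (x - chi e) + v (y + chi e) ∨
    ∃ f : E, x f < y f ∧ v x + v y ≤ v (x - chi e + chi f) + v (y + chi e - chi f)

/-- M-convex set: exchange property. -/
def MConvex (B : Set (E → ℤ)) : Prop :=
  ∀ x ∈ B, ∀ y ∈ B, ∀ e : E, y e < x e →
    ∃ f : E, x f < y f ∧ x - chi e + chi f ∈ B ∧ y + chi e - chi f ∈ B

/-- `ρ` is the rank function of `B`: `ρ S = max {z(S) : z ∈ B}`. -/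
def IsRank (B : Set (E → ℤ)) (ρ : Finset E → ℤ) : Prop :=
  ∀ S : Finset E, IsGreatest ((fun z : E → ℤ => ∑ e ∈ S, z e) '' B) (ρ S)

/-- Prices `p` are packing: a choice of preferred bundles oversells no item. -/
def Packing {N : Type*} [Fintype N] (b : E → ℤ) (v : N → (E → ℤ) → ℤ) (p : E → ℝ) : Prop :=
  ∃ z : N → E → ℤ, (∀ i, z i ∈ Demand b (v i) p) ∧ ∀ e, ∑ i, z i e ≤ b e

/-- Prices `p` are covering: a choice of preferred bundles sells all items. -/
def Covering {N : Type*} [Fintype N] (b : E → ℤ) (v : N → (E → ℤ) → ℤ) (p : E → ℝ) : Prop :=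
  ∃ z : N → E → ℤ, (∀ i, z i ∈ Demand b (v i) p) ∧ ∀ e, b e ≤ ∑ i, z i e

/-- Prices `p` are Walrasian: a choice of preferred bundles exactly exhausts the supply. -/
def Walrasian {N : Type*} [Fintype N] (b : E → ℤ) (v : N → (E → ℤ) → ℤ) (p : E → ℝ) : Prop :=
  ∃ z : N → E → ℤ, (∀ i, z i ∈ Demand b (v i) p) ∧ ∀ e, ∑ i, z i e = b e

set_option linter.unusedSectionVars false
set_option linter.unusedVariables false
set_option linter.unreachableTactic false
set_option linter.unusedTactic false
set_option maxHeartbeats 1000000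

lemma chi_self (e : E) : chi e e = 1 := if_pos rfl
lemma chi_ne {e f : E} (h : f ≠ e) : chi e f = 0 := if_neg h
lemma chi_nonneg (e f : E) : 0 ≤ chi e f := by unfold chi; split <;> omega
lemma sum_chi (S : Finset E) (e : E) : ∑ g ∈ S, chi e g = if e ∈ S then 1 else 0 := by
  simp only [chi]; rw [Finset.sum_ite_eq' S e (fun _ => (1:ℤ))]
lemma box_finite (b : E → ℤ) : (Box b).Finite := by
  have : Box b ⊆ Set.Icc 0 b := by
    intro z hz; exact Set.mem_Icc.mpr ⟨fun e => (hz e).1, fun e => (hz e).2⟩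
  exact (Set.finite_Icc _ _).subset this
lemma zero_mem_box {b : E → ℤ} (hb : (0 : E → ℤ) ≤ b) : (0 : E → ℤ) ∈ Box b :=
  fun e => ⟨le_refl _, hb e⟩
lemma demand_subset_box {b : E → ℤ} {v : (E → ℤ) → ℤ} {p : E → ℝ} :
    Demand b v p ⊆ Box b := fun _ hz => hz.1
lemma demand_finite {b : E → ℤ} {v : (E → ℤ) → ℤ} {p : E → ℝ} :
    (Demand b v p).Finite := (box_finite b).subset demand_subset_box
lemma demand_nonempty {b : E → ℤ} {v : (E → ℤ) → ℤ} {p : E → ℝ} (hb : (0 : E → ℤ) ≤ b) :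
    (Demand b v p).Nonempty := by
  obtain ⟨z, hz, hmax⟩ := Set.exists_max_image (Box b) (util v p) (box_finite b)
    ⟨0, zero_mem_box hb⟩
  exact ⟨z, hz, fun y hy => hmax y hy⟩
noncomputable def linp (p : E → ℝ) (x : E → ℤ) : ℝ := ∑ e, p e * (x e : ℝ)
lemma linp_add (p : E → ℝ) (x y : E → ℤ) : linp p (x + y) = linp p x + linp p y := by
  simp [linp, Pi.add_apply, mul_add, Finset.sum_add_distrib]
lemma linp_sub (p : E → ℝ) (x y : E → ℤ) : linp p (x - y) = linp p x - linp p y := by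
  simp [linp, Pi.sub_apply, mul_sub, Finset.sum_sub_distrib]
lemma linp_chi (p : E → ℝ) (e : E) : linp p (chi e) = p e := by
  simp only [linp, chi]
  rw [Finset.sum_eq_single e]
  · simp
  · intro g _ hg; simp [hg]
  · simp
lemma util_def (v : (E → ℤ) → ℤ) (p : E → ℝ) (x : E → ℤ) :
    util v p x = (v x : ℝ) - linp p x := rfl
lemma box_sub {b : E → ℤ} {x : E → ℤ} (hx : x ∈ Box b) {e : E} (he : 1 ≤ x e) :
    x - chi e ∈ Box b := by
  intro g
  by_cases hg : g = e
  · subst hg; simp only [Pi.sub_apply, chi_self]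
    exact ⟨by omega, by have := (hx g).2; omega⟩
  · simp only [Pi.sub_apply, chi_ne hg, sub_zero]; exact hx g
lemma box_add {b : E → ℤ} {x : E → ℤ} (hx : x ∈ Box b) {e : E} (he : x e < b e) :
    x + chi e ∈ Box b := by
  intro g
  by_cases hg : g = e
  · subst hg; simp only [Pi.add_apply, chi_self]
    exact ⟨by have := (hx g).1; omega, by omega⟩
  · simp only [Pi.add_apply, chi_ne hg, add_zero]; exact hx g
lemma demand_pair {b : E → ℤ} {v : (E → ℤ) → ℤ} {p : E → ℝ} {x y x' y' : E → ℤ}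
    (hx : x ∈ Demand b v p) (hy : y ∈ Demand b v p)
    (hx' : x' ∈ Box b) (hy' : y' ∈ Box b)
    (h : util v p x + util v p y ≤ util v p x' + util v p y') :
    x' ∈ Demand b v p ∧ y' ∈ Demand b v p := by
  have h1 : util v p x' ≤ util v p x := hx.2 x' hx'
  have h2 : util v p y' ≤ util v p y := hy.2 y' hy'
  have e1 : util v p x ≤ util v p x' := by linarith
  have e2 : util v p y ≤ util v p y' := by linarith
  exact ⟨⟨hx', fun w hw => le_trans (hx.2 w hw) e1⟩,
         ⟨hy', fun w hw => le_trans (hy.2 w hw) e2⟩⟩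

-- ============ NEW PART ============

lemma demand_exch {b : E → ℤ} {v : (E → ℤ) → ℤ} {p : E → ℝ} (hv : MNatConcave b v)
    {x y : E → ℤ} (hx : x ∈ Demand b v p) (hy : y ∈ Demand b v p) {e : E} (he : y e < x e) :
    (x - chi e ∈ Demand b v p ∧ y + chi e ∈ Demand b v p) ∨
    ∃ f, x f < y f ∧ x - chi e + chi f ∈ Demand b v p ∧ y + chi e - chi f ∈ Demand b v p := by
  have hxB := hx.1
  have hyB := hy.1
  have hxe1 : 1 ≤ x e := by have := (hyB e).1; omega
  have hyeb : y e < b e := lt_of_lt_of_le he (hxB e).2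
  rcases hv x hxB y hyB e he with h | ⟨f, hf, h⟩
  · left
    have hx' : x - chi e ∈ Box b := box_sub hxB hxe1
    have hy' : y + chi e ∈ Box b := box_add hyB hyeb
    refine demand_pair hx hy hx' hy' ?_
    have hcast : ((v x : ℝ) + v y) ≤ (v (x - chi e) : ℝ) + v (y + chi e) := by
      exact_mod_cast h
    simp only [util_def, linp_sub, linp_add, linp_chi]
    linarith
  · right
    have hef : e ≠ f := by intro hh; subst hh; omega
    have hfe : f ≠ e := Ne.symm hef
    have hfyb : x f < b f := lt_of_lt_of_le hf (hyB f).2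
    have hyf1 : 1 ≤ y f := by have := (hxB f).1; omega
    have hx' : x - chi e + chi f ∈ Box b := by
      refine box_add (box_sub hxB hxe1) ?_
      simp only [Pi.sub_apply, chi_ne hfe, sub_zero]
      exact hfyb
    have hy' : y + chi e - chi f ∈ Box b := by
      have heq : y + chi e - chi f = y - chi f + chi e := by abel
      rw [heq]
      refine box_add (box_sub hyB hyf1) ?_
      simp only [Pi.sub_apply, chi_ne hef, sub_zero]
      exact hyeb
    refine ⟨f, hf, demand_pair hx hy hx' hy' ?_⟩
    have hcast : ((v x : ℝ) + v y) ≤ (v (x - chi e + chi f) : ℝ) + v (y + chi e - chi f) := by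
      exact_mod_cast h
    simp only [util_def, linp_sub, linp_add, linp_chi]
    linarith

lemma sum_lt_of_le_of_ne {u w : E → ℤ} (h : u ≤ w) (hne : u ≠ w) :
    ∑ e, u e < ∑ e, w e := by
  obtain ⟨e, he⟩ : ∃ e, u e < w e := by
    by_contra hc
    push_neg at hc
    exact hne (le_antisymm h (fun e => hc e))
  exact Finset.sum_lt_sum (fun e _ => h e) ⟨e, Finset.mem_univ e, he⟩

lemma sum_addsub (S : Finset E) (x : E → ℤ) (e f : E) :
    ∑ g ∈ S, (x - chi e + chi f) g
      = (∑ g ∈ S, x g) - (if e ∈ S then 1 else 0) + (if f ∈ S then 1 else 0) := by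
  simp only [Pi.add_apply, Pi.sub_apply, Finset.sum_add_distrib, Finset.sum_sub_distrib,
    sum_chi]

lemma sum_subadd (S : Finset E) (x : E → ℤ) (e f : E) :
    ∑ g ∈ S, (x + chi e - chi f) g
      = (∑ g ∈ S, x g) + (if e ∈ S then 1 else 0) - (if f ∈ S then 1 else 0) := by
  simp only [Pi.add_apply, Pi.sub_apply, Finset.sum_add_distrib, Finset.sum_sub_distrib,
    sum_chi]

def dsum (z w : E → ℤ) : ℤ := ∑ e, |z e - w e|

lemma dsum_exchange {z w : E → ℤ} {e f : E} (he : w e < z e) (hf : z f < w f) :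
    dsum z (w + chi e - chi f) = dsum z w - 2 := by
  have hef : e ≠ f := by intro h; subst h; omega
  have key : ∀ g, |z g - (w + chi e - chi f) g| = |z g - w g| - chi e g - chi f g := by
    intro g
    by_cases hg : g = e
    · subst hg
      simp only [Pi.sub_apply, Pi.add_apply, chi_self, chi_ne hef]
      rw [abs_of_nonneg (by omega : (0:ℤ) ≤ z g - w g),
        abs_of_nonneg (by omega : (0:ℤ) ≤ z g - (w g + 1 - 0))]
      omega
    · by_cases hg' : g = f
      · subst hg'
        simp only [Pi.sub_apply, Pi.add_apply, chi_self, chi_ne (Ne.symm hef)]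
        rw [abs_of_nonpos (by omega : z g - w g ≤ 0),
          abs_of_nonpos (by omega : z g - (w g + 0 - 1) ≤ 0)]
        omega
      · simp only [Pi.sub_apply, Pi.add_apply, chi_ne hg, chi_ne hg', add_zero, sub_zero]
  rw [dsum, Finset.sum_congr rfl (fun g _ => key g)]
  simp only [Finset.sum_sub_distrib, sum_chi, Finset.mem_univ, if_pos, dsum]
  ring

-- appended to part2
lemma exists_mindemand_le {b : E → ℤ} {v : (E → ℤ) → ℤ} {p : E → ℝ} {z : E → ℤ}
    (hz : z ∈ Demand b v p) : ∃ z' ∈ MinDemand b v p, z' ≤ z := by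
  obtain ⟨w, ⟨hwD, hwle⟩, hwmin⟩ := Set.exists_min_image
    {y | y ∈ Demand b v p ∧ y ≤ z} (fun y => ∑ e, y e)
    (demand_finite.subset (fun y hy => hy.1)) ⟨z, hz, le_rfl⟩
  refine ⟨w, ⟨hwD, ?_⟩, hwle⟩
  intro u huD hule
  by_contra hne
  have h1 : ∑ e, u e < ∑ e, w e := sum_lt_of_le_of_ne hule hne
  have h2 : ∑ e, w e ≤ ∑ e, u e := hwmin u ⟨huD, le_trans hule hwle⟩
  omega

lemma sub_chi_le (z : E → ℤ) (e : E) : z - chi e ≤ z :=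
  fun g => sub_le_self _ (chi_nonneg e g)

lemma mindemand_main {b : E → ℤ} {v : (E → ℤ) → ℤ} {p : E → ℝ}
    (hb : (0 : E → ℤ) ≤ b) (hv : MNatConcave b v) :
    (MinDemand b v p).Nonempty ∧ MConvex (MinDemand b v p) ∧
    ∀ x ∈ MinDemand b v p, ∀ y ∈ MinDemand b v p, ∑ e, x e = ∑ e, y e := by
  classical
  obtain ⟨w0, hw0, hw0min⟩ := Set.exists_min_image (Demand b v p) (fun y => ∑ e, y e)
    demand_finite (demand_nonempty hb)
  have hmemMin : ∀ z, z ∈ Demand b v p → (∑ e, z e) = ∑ e, w0 e → z ∈ MinDemand b v p := by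
    intro z hzD hzs
    refine ⟨hzD, fun u huD hule => ?_⟩
    by_contra hne
    have h1 := sum_lt_of_le_of_ne hule hne
    have h2 := hw0min u huD
    omega
  have hnotmin : ∀ z ∈ MinDemand b v p, ∀ e : E, z - chi e ∉ Demand b v p := by
    intro z hzM e hmem
    have heq := hzM.2 _ hmem (sub_chi_le z e)
    have := congrFun heq e
    simp only [Pi.sub_apply, chi_self] at this
    omega
  have hsum : ∀ z ∈ MinDemand b v p, ∑ e, z e = ∑ e, w0 e := by
    intro z hzM
    obtain ⟨w, ⟨hwD, hws⟩, hwmin⟩ := Set.exists_min_image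
      {y | y ∈ Demand b v p ∧ ∑ e, y e = ∑ e, w0 e} (dsum z)
      (demand_finite.subset (fun y hy => hy.1)) ⟨w0, hw0, rfl⟩
    by_contra hne
    have hge : ∑ e, w0 e ≤ ∑ e, z e := hw0min z hzM.1
    obtain ⟨e, he⟩ : ∃ e, w e < z e := by
      by_contra hc
      push_neg at hc
      have := Finset.sum_le_sum (fun e (_ : e ∈ Finset.univ) => hc e)
      omega
    rcases demand_exch hv hzM.1 hwD he with ⟨h1, _⟩ | ⟨f, hf, _, hw'⟩
    · exact hnotmin z hzM e h1
    · have hw'W : (w + chi e - chi f) ∈ {y | y ∈ Demand b v p ∧ ∑ e, y e = ∑ e, w0 e} := by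
        refine ⟨hw', ?_⟩
        rw [sum_subadd]
        simp only [Finset.mem_univ, if_pos]
        omega
      have hd := hwmin _ hw'W
      rw [dsum_exchange he hf] at hd
      omega
  have hMC : MConvex (MinDemand b v p) := by
    intro x hxM y hyM e he
    rcases demand_exch hv hxM.1 hyM.1 he with ⟨h1, _⟩ | ⟨f, hf, hx', hy'⟩
    · exact absurd h1 (hnotmin x hxM e)
    · have hef : e ≠ f := by intro hh; subst hh; omega
      refine ⟨f, hf, ?_, ?_⟩
      · refine hmemMin _ hx' ?_
        rw [sum_addsub]
        simp only [Finset.mem_univ, if_pos]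
        have := hsum x hxM
        omega
      · refine hmemMin _ hy' ?_
        rw [sum_subadd]
        simp only [Finset.mem_univ, if_pos]
        have := hsum y hyM
        omega
  exact ⟨⟨w0, hmemMin w0 hw0 rfl⟩, hMC,
    fun x hx y hy => (hsum x hx).trans (hsum y hy).symm⟩

-- triangle property of exchange graphs of M-convex sets
lemma mconvex_triangle {B : Set (E → ℤ)} (hB : MConvex B) {x : E → ℤ} {u1 u2 u3 : E}
    (h12 : x - chi u1 + chi u2 ∈ B) (h23 : x - chi u2 + chi u3 ∈ B)
    (h12n : u1 ≠ u2) (h23n : u2 ≠ u3) (h13n : u1 ≠ u3) :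
    x - chi u1 + chi u3 ∈ B := by
  have hlt : (x - chi u2 + chi u3) u2 < (x - chi u1 + chi u2) u2 := by
    simp only [Pi.sub_apply, Pi.add_apply, chi_self, chi_ne (Ne.symm h12n), chi_ne h23n]
    omega
  obtain ⟨f, hflt, hA, hC⟩ := hB _ h12 _ h23 u2 hlt
  by_cases hf3 : f = u3
  · rw [hf3] at hA
    have heq : x - chi u1 + chi u2 - chi u2 + chi u3 = x - chi u1 + chi u3 := by abel
    rwa [heq] at hA
  · by_cases hf1 : f = u1
    · rw [hf1] at hC
      have heq : x - chi u2 + chi u3 + chi u2 - chi u1 = x - chi u1 + chi u3 := by abel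
      rwa [heq] at hC
    · exfalso
      have : (x - chi u2 + chi u3) f ≤ (x - chi u1 + chi u2) f := by
        simp only [Pi.sub_apply, Pi.add_apply, chi_ne hf3, chi_ne hf1]
        have := chi_nonneg u2 f
        omega
      omega

lemma noshortcut {B : Set (E → ℤ)} (hB : MConvex B) {k : ℕ} {a : Fin (k+1) → E}
    (ha : ∀ s t : Fin (k+1), (s : ℕ) ≠ (t : ℕ) → a s ≠ a t) :
    ∀ (n : ℕ) (J : Finset (Fin k)) (x : E → ℤ), J.card = n → x ∈ B →
    (∀ j ∈ J, x - chi (a j.castSucc) + chi (a j.succ) ∈ B) →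
    (∀ j ∈ J, ∀ j' ∈ J, (j' : ℕ) ≠ (j : ℕ) + 1) →
    (∀ j ∈ J, ∀ l : Fin (k+1), (j : ℕ) + 1 < (l : ℕ) → x - chi (a j.castSucc) + chi (a l) ∉ B) →
    x + ∑ j ∈ J, (chi (a j.succ) - chi (a j.castSucc)) ∈ B := by
  intro n
  induction n with
  | zero =>
    intro J x hcard hx _ _ _
    rw [Finset.card_eq_zero.mp hcard]
    simpa using hx
  | succ n ih =>
    intro J x hcard hx harc hcons hshort
    have hJne : J.Nonempty := Finset.card_pos.mp (by omega)
    set j1 := J.min' hJne with hj1def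
    have hj1J : j1 ∈ J := J.min'_mem hJne
    set y := x - chi (a j1.castSucc) + chi (a j1.succ) with hydef
    have hyB : y ∈ B := harc j1 hj1J
    set J' := J.erase j1 with hJ'def
    have hJ'card : J'.card = n := by
      rw [hJ'def, Finset.card_erase_of_mem hj1J, hcard]
      omega
    -- basic index facts
    have hjgt : ∀ j ∈ J', (j1 : ℕ) + 2 ≤ (j : ℕ) := by
      intro j hj
      have h1 : j1 ≤ j := J.min'_le j (Finset.mem_of_mem_erase hj)
      have h2 : j ≠ j1 := Finset.ne_of_mem_erase hj
      have h3 : (j : ℕ) ≠ (j1 : ℕ) + 1 := hcons j1 hj1J j (Finset.mem_of_mem_erase hj)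
      have h4 : (j1 : ℕ) ≤ (j : ℕ) := h1
      have h5 : (j1 : ℕ) ≠ (j : ℕ) := fun hh => h2 (Fin.ext hh.symm)
      omega
    -- new arcs
    have harc' : ∀ j ∈ J', y - chi (a j.castSucc) + chi (a j.succ) ∈ B := by
      intro j hj
      have hjJ : j ∈ J := Finset.mem_of_mem_erase hj
      have hgt := hjgt j hj
      have hz : x - chi (a j.castSucc) + chi (a j.succ) ∈ B := harc j hjJ
      -- distinctness
      have d1 : a j.castSucc ≠ a j.succ := ha _ _ (by simp only [Fin.coe_castSucc, Fin.val_succ]; omega)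
      have d2 : a j1.castSucc ≠ a j.succ := ha _ _ (by simp only [Fin.coe_castSucc, Fin.val_succ]; omega)
      have d3 : a j1.succ ≠ a j.succ := ha _ _ (by simp only [Fin.coe_castSucc, Fin.val_succ]; omega)
      have hlt : y (a j.succ) < (x - chi (a j.castSucc) + chi (a j.succ)) (a j.succ) := by
        simp only [hydef, Pi.sub_apply, Pi.add_apply, chi_self,
          chi_ne (Ne.symm d1), chi_ne (Ne.symm d2), chi_ne (Ne.symm d3)]
        omega
      obtain ⟨f, hflt, hz', hy'⟩ := hB _ hz _ hyB (a j.succ) hlt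
      by_cases hfp : f = a j.castSucc
      · rw [hfp] at hy'
        have heq : y + chi (a j.succ) - chi (a j.castSucc)
            = y - chi (a j.castSucc) + chi (a j.succ) := by abel
        rwa [heq] at hy'
      · exfalso
        by_cases hfq : f = a j1.succ
        · rw [hfq] at hy'
          have heq : y + chi (a j.succ) - chi (a j1.succ)
              = x - chi (a j1.castSucc) + chi (a j.succ) := by
            rw [hydef]; abel
          rw [heq] at hy'
          exact hshort j1 hj1J j.succ (by simp only [Fin.coe_castSucc, Fin.val_succ]; omega) hy'
        · have hcomp : y f ≤ (x - chi (a j.castSucc) + chi (a j.succ)) f := by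
            by_cases hfq1 : f = a j1.castSucc
            · subst hfq1
              have d4 : a j1.castSucc ≠ a j1.succ := ha _ _ (by simp only [Fin.coe_castSucc, Fin.val_succ]; omega)
              have d5 : a j1.castSucc ≠ a j.castSucc := ha _ _ (by simp only [Fin.coe_castSucc, Fin.val_succ]; omega)
              have d6 : a j1.castSucc ≠ a j.succ := ha _ _ (by simp only [Fin.coe_castSucc, Fin.val_succ]; omega)
              simp only [hydef, Pi.sub_apply, Pi.add_apply, chi_self,
                chi_ne d4, chi_ne d5, chi_ne d6]
              omega
            · simp only [hydef, Pi.sub_apply, Pi.add_apply,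
                chi_ne hfq1, chi_ne hfq, chi_ne hfp]
              have h6 := chi_nonneg (a j.succ) f
              have h7 := chi_nonneg (a j1.castSucc) f
              omega
          omega
    -- new shortcuts
    have hshort' : ∀ j ∈ J', ∀ l : Fin (k+1), (j : ℕ) + 1 < (l : ℕ) →
        y - chi (a j.castSucc) + chi (a l) ∉ B := by
      intro j hj l hl hw
      have hjJ : j ∈ J := Finset.mem_of_mem_erase hj
      have hgt := hjgt j hj
      have d1 : a j1.succ ≠ a j1.castSucc := ha _ _ (by simp only [Fin.coe_castSucc, Fin.val_succ]; omega)
      have d2 : a j1.succ ≠ a j.castSucc := ha _ _ (by simp only [Fin.coe_castSucc, Fin.val_succ]; omega)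
      have d3 : a j1.succ ≠ a l := ha _ _ (by simp only [Fin.coe_castSucc, Fin.val_succ]; omega)
      have hlt : x (a j1.succ) < (y - chi (a j.castSucc) + chi (a l)) (a j1.succ) := by
        simp only [hydef, Pi.sub_apply, Pi.add_apply, chi_self,
          chi_ne d1, chi_ne d2, chi_ne d3]
        omega
      obtain ⟨f, hflt, hw', hx'⟩ := hB _ hw _ hx (a j1.succ) hlt
      by_cases hf1 : f = a j1.castSucc
      · rw [hf1] at hw'
        have heq : y - chi (a j.castSucc) + chi (a l) - chi (a j1.succ) + chi (a j1.castSucc)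
            = x - chi (a j.castSucc) + chi (a l) := by
          rw [hydef]; abel
        rw [heq] at hw'
        exact hshort j hjJ l hl hw'
      · by_cases hf2 : f = a j.castSucc
        · subst hf2
          have heq : y - chi (a j.castSucc) + chi (a l) - chi (a j1.succ) + chi (a j.castSucc)
              = x - chi (a j1.castSucc) + chi (a l) := by
            rw [hydef]; abel
          rw [heq] at hw'
          exact hshort j1 hj1J l (by omega) hw'
        · have hcomp : x f ≤ (y - chi (a j.castSucc) + chi (a l)) f := by
            by_cases hf3 : f = a j1.succ
            · rw [hf3]; omega
            · by_cases hf4 : f = a l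
              · subst hf4
                have d4 : a l ≠ a j1.castSucc := ha _ _ (by simp only [Fin.coe_castSucc, Fin.val_succ]; omega)
                have d5 : a l ≠ a j.castSucc := ha _ _ (by simp only [Fin.coe_castSucc, Fin.val_succ]; omega)
                simp only [hydef, Pi.sub_apply, Pi.add_apply, chi_self,
                  chi_ne d4, chi_ne d5, chi_ne (Ne.symm d3)]
                omega
              · simp only [hydef, Pi.sub_apply, Pi.add_apply,
                  chi_ne hf1, chi_ne hf2, chi_ne hf4]
                have h8 := chi_nonneg (a j1.succ) f
                omega
          omega
    have hcons' : ∀ j ∈ J', ∀ j' ∈ J', (j' : ℕ) ≠ (j : ℕ) + 1 :=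
      fun j hj j' hj' => hcons j (Finset.mem_of_mem_erase hj) j' (Finset.mem_of_mem_erase hj')
    have hres := ih J' y hJ'card hyB harc' hcons' hshort'
    have heq : y + ∑ j ∈ J', (chi (a j.succ) - chi (a j.castSucc))
        = x + ∑ j ∈ J, (chi (a j.succ) - chi (a j.castSucc)) := by
      rw [← Finset.sum_erase_add J _ hj1J, hydef, ← hJ'def]
      abel
    rwa [heq] at hres

lemma splice {Arc : E → E → Prop} {P Q : E → Prop} {k : ℕ} {a : Fin (k+1) → E}
    (h0 : P (a 0)) (hl : Q (a (Fin.last k)))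
    (harc : ∀ t : Fin k, Arc (a t.castSucc) (a t.succ))
    (s d : ℕ) (hd : 1 ≤ d) (hsd : s + d ≤ k)
    (hbridge : ∀ _hr : s + d + 1 ≤ k, Arc (a ⟨s, by omega⟩) (a ⟨s + d + 1, by omega⟩))
    (hlast : ∀ _he : s + d = k, a ⟨s, by omega⟩ = a ⟨k, by omega⟩) :
    ∃ a' : Fin (k - d + 1) → E, P (a' 0) ∧ Q (a' (Fin.last (k - d))) ∧
      ∀ t : Fin (k - d), Arc (a' t.castSucc) (a' t.succ) := by
  have hsk : s ≤ k - d := by omega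
  set a' : Fin (k - d + 1) → E := fun u =>
    a ⟨if (u : ℕ) ≤ s then (u : ℕ) else (u : ℕ) + d, by have := u.isLt; split <;> omega⟩
    with ha'
  have key : ∀ (u : Fin (k - d + 1)) (w : Fin (k+1)),
      ((u : ℕ) ≤ s → (w : ℕ) = (u : ℕ)) → (¬ (u : ℕ) ≤ s → (w : ℕ) = (u : ℕ) + d) →
      a' u = a w := by
    intro u w h1 h2
    apply congrArg a
    apply Fin.ext
    simp only
    split_ifs with h
    · exact (h1 h).symm
    · exact (h2 h).symm
  refine ⟨a', ?_, ?_, ?_⟩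
  · rw [key 0 0 (fun _ => rfl) (fun hc => absurd (Nat.zero_le s) hc)]
    exact h0
  · by_cases hks : k - d ≤ s
    · have h2 : s + d = k := by omega
      rw [key (Fin.last (k - d)) ⟨s, by omega⟩
        (fun _ => by simp only [Fin.val_last]; omega)
        (fun hc => absurd (by simp only [Fin.val_last]; omega) hc)]
      have h3 : a (⟨s, by omega⟩ : Fin (k+1)) = a (Fin.last k) := by
        rw [hlast h2]
        exact congrArg a (Fin.ext (by simp only [Fin.val_last]))
      rw [h3]
      exact hl
    · rw [key (Fin.last (k - d)) (Fin.last k)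
        (fun hc => absurd hc (by simp only [Fin.val_last]; omega))
        (fun _ => by simp only [Fin.val_last]; omega)]
      exact hl
  · intro t
    have htlt := t.isLt
    by_cases h1 : (t : ℕ) + 1 ≤ s
    · rw [key t.castSucc ⟨(t : ℕ), by omega⟩
          (fun _ => by simp) (fun hc => absurd (by simp only [Fin.coe_castSucc]; omega) hc),
        key t.succ ⟨(t : ℕ) + 1, by omega⟩
          (fun _ => by simp) (fun hc => absurd (by simp only [Fin.val_succ]; omega) hc)]
      have := harc ⟨(t : ℕ), by omega⟩
      convert this using 2 <;> exact Fin.ext (by simp)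
    · by_cases h2 : (t : ℕ) ≤ s
      · have hts : (t : ℕ) = s := by omega
        have hrange : s + d + 1 ≤ k := by omega
        rw [key t.castSucc ⟨s, by omega⟩
            (fun _ => by simp only [Fin.coe_castSucc]; omega)
            (fun hc => absurd (by simp only [Fin.coe_castSucc]; omega) hc),
          key t.succ ⟨s + d + 1, by omega⟩
            (fun hc => absurd hc (by simp only [Fin.val_succ]; omega))
            (fun _ => by simp only [Fin.val_succ]; omega)]
        exact hbridge hrange
      · rw [key t.castSucc ⟨(t : ℕ) + d, by omega⟩
            (fun hc => absurd hc (by simp only [Fin.coe_castSucc]; omega))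
            (fun _ => by simp only [Fin.coe_castSucc]),
          key t.succ ⟨(t : ℕ) + d + 1, by omega⟩
            (fun hc => absurd hc (by simp only [Fin.val_succ]; omega))
            (fun _ => by simp only [Fin.val_succ]; omega)]
        have := harc ⟨(t : ℕ) + d, by omega⟩
        convert this using 2 <;> exact Fin.ext (by simp)


/-- With strong gross substitutes valuations, prices are packing iff no set is
overdemanded: `Σ_i (ρ̌_i(E) − ρ̌_i(E∖S)) ≤ b(S)` for all `S`. -/
theorem stmt5 {N : Type*} [Fintype N] (b : E → ℤ) (hb : 0 ≤ b)
    (v : N → (E → ℤ) → ℤ) (hsgs : ∀ i, MNatConcave b (v i))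
    (hmono : ∀ i, ∀ x ∈ Box b, ∀ y ∈ Box b, x ≤ y → v i x ≤ v i y)
    (p : E → ℝ) (hp : 0 ≤ p)
    (ρ : N → Finset E → ℤ) (hρ : ∀ i, IsRank (MinDemand b (v i) p) (ρ i)) :
    Packing b v p ↔
      ∀ S : Finset E, ∑ i, (ρ i univ - ρ i Sᶜ) ≤ ∑ e ∈ S, b e := by
  classical
  have hBprops := fun i => mindemand_main (b := b) (v := v i) (p := p) hb (hsgs i)
  have hBne : ∀ i, (MinDemand b (v i) p).Nonempty := fun i => (hBprops i).1
  have hBmc : ∀ i, MConvex (MinDemand b (v i) p) := fun i => (hBprops i).2.1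
  have hBsum : ∀ i, ∀ x ∈ MinDemand b (v i) p, ∀ y ∈ MinDemand b (v i) p,
      ∑ e, x e = ∑ e, y e := fun i => (hBprops i).2.2
  have hρuniv : ∀ i, ∀ y ∈ MinDemand b (v i) p, ρ i univ = ∑ e, y e := by
    intro i y hy
    obtain ⟨y0, hy0, hval⟩ := (hρ i univ).1
    rw [← hval]
    exact hBsum i y0 hy0 y hy
  have hρle : ∀ i (S : Finset E), ∀ y ∈ MinDemand b (v i) p, ∑ e ∈ S, y e ≤ ρ i S :=
    fun i S y hy => (hρ i S).2 ⟨y, hy, rfl⟩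
  constructor
  · rintro ⟨z, hzD, hload⟩ S
    choose z' hz'M hz'le using fun i => exists_mindemand_le (hzD i)
    have step1 : ∀ i, ρ i univ - ρ i Sᶜ ≤ ∑ e ∈ S, z' i e := by
      intro i
      have h1 : ρ i univ = ∑ e, z' i e := hρuniv i _ (hz'M i)
      have h2 : ∑ e ∈ Sᶜ, z' i e ≤ ρ i Sᶜ := hρle i Sᶜ _ (hz'M i)
      have h3 := Finset.sum_compl_add_sum S (z' i)
      omega
    calc ∑ i, (ρ i univ - ρ i Sᶜ) ≤ ∑ i, ∑ e ∈ S, z' i e :=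
          Finset.sum_le_sum (fun i _ => step1 i)
      _ ≤ ∑ i, ∑ e ∈ S, z i e :=
          Finset.sum_le_sum (fun i _ => Finset.sum_le_sum (fun e _ => hz'le i e))
      _ = ∑ e ∈ S, ∑ i, z i e := Finset.sum_comm
      _ ≤ ∑ e ∈ S, b e := Finset.sum_le_sum (fun e _ => hload e)
  · intro hcond
    set Z : Set (N → E → ℤ) := {zz | ∀ i, zz i ∈ MinDemand b (v i) p} with hZdef
    have hZfin : Z.Finite := by
      refine (Set.Finite.pi (fun _ : N => box_finite b)).subset ?_
      intro zz hzz
      exact Set.mem_pi.mpr (fun i _ => (hzz i).1.1)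
    have hZne : Z.Nonempty := by
      choose f hf using hBne
      exact ⟨f, hf⟩
    set φ : (N → E → ℤ) → ℤ := fun zz => ∑ e, max (∑ i, zz i e - b e) 0 with hφdef
    obtain ⟨z, hzZ, hzmin⟩ := Set.exists_min_image Z φ hZfin hZne
    suffices hok : ∀ e, ∑ i, z i e ≤ b e by
      exact ⟨z, fun i => (hzZ i).1, hok⟩
    by_contra hbad
    push_neg at hbad
    obtain ⟨e0, he0⟩ := hbad
    set load : E → ℤ := fun e => ∑ i, z i e with hloaddef
    set Arc : E → E → Prop := fun g f => ∃ i, z i - chi g + chi f ∈ MinDemand b (v i) p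
      with hArcdef
    set R : Set E := {f | ∃ k, ∃ a : Fin (k+1) → E, b (a 0) < load (a 0) ∧
      (∀ t : Fin k, Arc (a t.castSucc) (a t.succ)) ∧ a (Fin.last k) = f} with hRdef
    have he0R : e0 ∈ R := ⟨0, fun _ => e0, he0, fun t => t.elim0, rfl⟩
    have hRext : ∀ g f, g ∈ R → Arc g f → f ∈ R := by
      rintro g f ⟨k, a, h0, harc, hlastg⟩ hgf
      refine ⟨k + 1, Fin.snoc a f, ?_, ?_, ?_⟩
      · have h1 : (Fin.snoc a f : Fin (k+2) → E) 0 = a 0 := by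
          rw [show (0 : Fin (k+2)) = Fin.castSucc 0 by simp]
          rw [Fin.snoc_castSucc]
        rw [h1]
        exact h0
      · intro t
        refine Fin.lastCases ?_ ?_ t
        · rw [Fin.snoc_castSucc, Fin.succ_last, Fin.snoc_last, hlastg]
          exact hgf
        · intro j
          rw [Fin.succ_castSucc, Fin.snoc_castSucc, Fin.snoc_castSucc]
          exact harc j
      · rw [Fin.snoc_last]
    by_cases hA : ∃ f ∈ R, load f < b f
    -- CASE A : augmenting path exists
    · obtain ⟨fu, ⟨k1, a1, h10, h1arc, h1last⟩, hfu⟩ := hA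
      set K : Set ℕ := {k | ∃ a : Fin (k+1) → E, b (a 0) < load (a 0) ∧
        load (a (Fin.last k)) < b (a (Fin.last k)) ∧
        ∀ t : Fin k, Arc (a t.castSucc) (a t.succ)} with hKdef
      have hKne : K.Nonempty := ⟨k1, a1, h10, by rwa [h1last], h1arc⟩
      obtain ⟨k0, hk0K, hk0min⟩ :=
        (wellFounded_lt : WellFounded ((· < ·) : ℕ → ℕ → Prop)).has_min K hKne
      obtain ⟨a, hover, hunder, harcs⟩ := hk0K
      have hover' : b (a 0) < ∑ i, z i (a 0) := hover
      have hunder' : (∑ i, z i (a (Fin.last k0))) < b (a (Fin.last k0)) := hunder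
      have hk0pos : 1 ≤ k0 := by
        by_contra hk
        have hk0 : k0 = 0 := by omega
        subst hk0
        have : (Fin.last 0 : Fin 1) = 0 := rfl
        rw [this] at hunder
        omega
      -- injectivity of the path
      have hainj' : ∀ s t : Fin (k0+1), (s : ℕ) < (t : ℕ) → a s ≠ a t := by
        intro s t hst heq
        have hsk : (s : ℕ) + ((t : ℕ) - (s : ℕ)) ≤ k0 := by have := t.isLt; omega
        obtain ⟨a2, p0, pl, parc⟩ := splice (Arc := Arc)
          (P := fun e => b e < load e) (Q := fun e => load e < b e)
          hover hunder harcs (s : ℕ) ((t : ℕ) - (s : ℕ)) (by omega) hsk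
          (by
            intro hr
            have e1 : a (⟨(s : ℕ), by omega⟩ : Fin (k0+1)) = a t := by
              rw [show (⟨(s : ℕ), by omega⟩ : Fin (k0+1)) = s from Fin.ext rfl]
              exact heq
            rw [e1]
            have := harcs ⟨(t : ℕ), by omega⟩
            convert this using 2 <;> exact Fin.ext (by simp <;> omega))
          (by
            intro hel
            rw [show (⟨(s : ℕ), by omega⟩ : Fin (k0+1)) = s from Fin.ext rfl, heq]
            exact congrArg a (Fin.ext (by simp; omega)))
        exact hk0min (k0 - ((t : ℕ) - (s : ℕ))) ⟨a2, p0, pl, parc⟩ (by omega)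
      have hainj : ∀ s t : Fin (k0+1), (s : ℕ) ≠ (t : ℕ) → a s ≠ a t := by
        intro s t hst
        rcases Nat.lt_or_ge (s : ℕ) (t : ℕ) with h | h
        · exact hainj' s t h
        · exact fun heq => (hainj' t s (by omega)) heq.symm
      -- no chords
      have hnochord : ∀ s t : Fin (k0+1), (s : ℕ) + 1 < (t : ℕ) → ¬ Arc (a s) (a t) := by
        intro s t hst harcst
        have hsk : (s : ℕ) + ((t : ℕ) - (s : ℕ) - 1) ≤ k0 := by have := t.isLt; omega
        obtain ⟨a2, p0, pl, parc⟩ := splice (Arc := Arc)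
          (P := fun e => b e < load e) (Q := fun e => load e < b e)
          hover hunder harcs (s : ℕ) ((t : ℕ) - (s : ℕ) - 1) (by omega) hsk
          (by
            intro hr
            have e1 : (⟨(s : ℕ), by omega⟩ : Fin (k0+1)) = s := Fin.ext rfl
            have e2 : (⟨(s : ℕ) + ((t : ℕ) - (s : ℕ) - 1) + 1, by omega⟩ : Fin (k0+1)) = t :=
              Fin.ext (by simp; omega)
            rw [e1, e2]
            exact harcst)
          (by
            intro hel
            exfalso
            have := t.isLt
            omega)
        exact hk0min (k0 - ((t : ℕ) - (s : ℕ) - 1)) ⟨a2, p0, pl, parc⟩ (by omega)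
      -- choose witness buyers
      choose w hw using harcs
      set z' : N → E → ℤ := fun i =>
        z i + ∑ t ∈ Finset.univ.filter (fun t => w t = i),
          (chi (a t.succ) - chi (a t.castSucc)) with hz'def
      have hz'B : ∀ i, z' i ∈ MinDemand b (v i) p := by
        intro i
        refine noshortcut (hBmc i) hainj _ _ (z i) rfl (hzZ i) ?_ ?_ ?_
        · intro j hj
          have hwj : w j = i := (Finset.mem_filter.mp hj).2
          have := hw j
          rwa [hwj] at this
        · intro j hj j' hj' hcontra
          have hwj : w j = i := (Finset.mem_filter.mp hj).2
          have hwj' : w j' = i := (Finset.mem_filter.mp hj').2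
          have A1 := hw j; rw [hwj] at A1
          have A2 := hw j'; rw [hwj'] at A2
          have hcs : j'.castSucc = j.succ := Fin.ext (by simp [hcontra])
          rw [hcs] at A2
          have d1 : a j.castSucc ≠ a j.succ :=
            hainj _ _ (by simp only [Fin.coe_castSucc, Fin.val_succ]; omega)
          have d2 : a j.succ ≠ a j'.succ :=
            hainj _ _ (by simp only [Fin.val_succ]; omega)
          have d3 : a j.castSucc ≠ a j'.succ :=
            hainj _ _ (by simp only [Fin.coe_castSucc, Fin.val_succ]; omega)
          have htri := mconvex_triangle (hBmc i) A1 A2 d1 d2 d3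
          exact hnochord j.castSucc j'.succ
            (by simp only [Fin.coe_castSucc, Fin.val_succ]; omega) ⟨i, htri⟩
        · intro j hj l hl hmem
          exact hnochord j.castSucc l
            (by simp only [Fin.coe_castSucc]; omega) ⟨i, hmem⟩
      have hz'Z : z' ∈ Z := hz'B
      -- load computation
      have hload' : ∀ e, (∑ i, z' i e) =
          (∑ i, z i e) - chi (a 0) e + chi (a (Fin.last k0)) e := by
        intro e
        have h1 : ∑ i, z' i e = ∑ i, z i e +
            ∑ i, ∑ t ∈ Finset.univ.filter (fun t => w t = i),
              (chi (a t.succ) e - chi (a t.castSucc) e) := by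
          simp only [hz'def, Pi.add_apply, Finset.sum_apply, Pi.sub_apply]
          rw [Finset.sum_add_distrib]
        have h2 : ∑ i, ∑ t ∈ Finset.univ.filter (fun t => w t = i),
            (chi (a t.succ) e - chi (a t.castSucc) e)
            = ∑ t : Fin k0, (chi (a t.succ) e - chi (a t.castSucc) e) :=
          Finset.sum_fiberwise _ _ _
        set G : ℕ → ℤ := fun n => if h : n ≤ k0 then chi (a ⟨n, by omega⟩) e else 0
          with hGdef
        have h3 : ∀ t : Fin k0, chi (a t.succ) e - chi (a t.castSucc) e
            = G ((t : ℕ) + 1) - G (t : ℕ) := by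
          intro t
          have htlt := t.isLt
          rw [hGdef]
          simp only
          rw [dif_pos (by omega : (t : ℕ) + 1 ≤ k0), dif_pos (by omega : (t : ℕ) ≤ k0)]
          congr 2 <;> exact Fin.ext (by simp)
        have h4 : ∑ t : Fin k0, (chi (a t.succ) e - chi (a t.castSucc) e)
            = G k0 - G 0 := by
          rw [Finset.sum_congr rfl (fun t _ => h3 t)]
          rw [Fin.sum_univ_eq_sum_range (fun n => G (n + 1) - G n) k0]
          exact Finset.sum_range_sub G k0
        have h5 : G k0 = chi (a (Fin.last k0)) e := by
          rw [hGdef]; simp only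
          rw [dif_pos (le_refl k0)]
          rw [show (⟨k0, by omega⟩ : Fin (k0+1)) = Fin.last k0 from Fin.ext (by simp)]
        have h6 : G 0 = chi (a 0) e := by
          rw [hGdef]; simp only
          rw [dif_pos (Nat.zero_le k0)]
          rw [show (⟨0, by omega⟩ : Fin (k0+1)) = 0 from Fin.ext (by simp)]
        rw [h1, h2, h4, h5, h6]
        ring
      have hne0 : a 0 ≠ a (Fin.last k0) :=
        hainj _ _ (by simp only [Fin.val_zero, Fin.val_last]; omega)
      have hkey : φ z' < φ z := by
        rw [hφdef]
        simp only
        apply Finset.sum_lt_sum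
        · intro e _
          rw [hload' e]
          by_cases h1 : e = a 0
          · subst h1
            rw [chi_self, chi_ne hne0]
            exact max_le_max (by omega) le_rfl
          · by_cases h2 : e = a (Fin.last k0)
            · subst h2
              rw [chi_self, chi_ne (Ne.symm hne0)]
              apply max_le
              · exact le_trans (by omega) (le_max_right _ _)
              · exact le_max_right _ _
            · rw [chi_ne (fun hh => h1 hh), chi_ne (fun hh => h2 hh)]
              omega
        · refine ⟨a 0, Finset.mem_univ _, ?_⟩
          rw [hload' (a 0), chi_self, chi_ne hne0]
          rw [max_eq_left (by omega), max_eq_left (by omega)]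
          omega
      have := hzmin z' hz'Z
      omega
    -- CASE B : no reachable deficient element, build the overdemanded set
    · push_neg at hA
      set S : Finset E := Finset.univ.filter (· ∈ R) with hSdef
      have hmemS : ∀ e, e ∈ S ↔ e ∈ R := by
        intro e; simp [hSdef]
      have hmemSc : ∀ e, e ∈ Sᶜ ↔ e ∉ R := by
        intro e; simp [hSdef]
      have hρS : ∀ i, ρ i Sᶜ = ∑ e ∈ Sᶜ, z i e := by
        intro i
        refine le_antisymm ?_ (hρle i Sᶜ _ (hzZ i))
        obtain ⟨y0, hy0, hy0v⟩ := (hρ i Sᶜ).1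
        obtain ⟨y, ⟨hyM, hyv⟩, hymin⟩ := Set.exists_min_image
          {y | y ∈ MinDemand b (v i) p ∧ ∑ e ∈ Sᶜ, y e = ρ i Sᶜ} (dsum (z i))
          ((box_finite b).subset (fun y hy => hy.1.1.1)) ⟨y0, hy0, hy0v⟩
        by_contra hlt'
        push_neg at hlt'
        obtain ⟨f, hfSc, hf⟩ : ∃ f ∈ Sᶜ, z i f < y f := by
          by_contra hc
          push_neg at hc
          have h9 := Finset.sum_le_sum (fun e he => hc e he)
          linarith
        obtain ⟨g, hg, hy', hz'⟩ := hBmc i y hyM (z i) (hzZ i) f hf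
        have harcgf : Arc g f := by
          refine ⟨i, ?_⟩
          have heq : z i - chi g + chi f = z i + chi f - chi g := by abel
          rwa [heq]
        have hgR : g ∉ R := by
          intro hgR
          exact (hmemSc f).mp hfSc (hRext g f hgR harcgf)
        have hgSc : g ∈ Sᶜ := (hmemSc g).mpr hgR
        have hy'W : y - chi f + chi g ∈
            {y | y ∈ MinDemand b (v i) p ∧ ∑ e ∈ Sᶜ, y e = ρ i Sᶜ} := by
          refine ⟨hy', ?_⟩
          rw [sum_addsub, if_pos hfSc, if_pos hgSc]
          linarith
        have hd := hymin _ hy'W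
        have heq2 : y - chi f + chi g = y + chi g - chi f := by abel
        rw [heq2, dsum_exchange hg hf] at hd
        linarith
      have hfinal : ∀ i, ρ i univ - ρ i Sᶜ = ∑ e ∈ S, z i e := by
        intro i
        rw [hρuniv i _ (hzZ i), hρS i]
        have := Finset.sum_compl_add_sum S (z i)
        omega
      have hsum1 : ∑ i, (ρ i univ - ρ i Sᶜ) = ∑ e ∈ S, load e := by
        rw [Finset.sum_congr rfl (fun i _ => hfinal i), Finset.sum_comm]
      have hgt : ∑ e ∈ S, b e < ∑ e ∈ S, load e := by
        refine Finset.sum_lt_sum (fun e heS => hA e ((hmemS e).mp heS)) ?_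
        exact ⟨e0, (hmemS e0).mpr he0R, he0⟩
      have := hcond S
      omega
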